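/- Projecting out the auxiliary continuous variables of the multiple-choice extended formulation yields exactly the ideal non-extended relaxation: for every (x, y, z) ∈ (Fin η → ℝ) × ℝ × ℝ, there exist x⁰, x¹ : Fin η → ℝ and y⁰, y¹ : ℝ with (x, y, z, x⁰, x¹, y⁰, y¹) ∈ Q if and only if (x, y, z) ∈ P. -/

import Mathlib

open Finset

/-- The affine function `f(x) = w · x + b`. -/
noncomputable def fAff {η : ℕ} (w : Fin η → ℝ) (b : ℝ) (x : Fin η → ℝ) : ℝ :=
  (∑ i, w i * x i) + b

/-- The rectified linear unit. -/
noncomputable def ReLU (v : ℝ) : ℝ := max 0 v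

/-- The box `[L, U]`. -/
def Box {η : ℕ} (L U : Fin η → ℝ) : Set (Fin η → ℝ) :=
  {x | ∀ i, L i ≤ x i ∧ x i ≤ U i}

/-- `L̆ i`. -/
noncomputable def Lbreve {η : ℕ} (w L U : Fin η → ℝ) (i : Fin η) : ℝ :=
  if 0 ≤ w i then L i else U i

/-- `Ŭ i`. -/
noncomputable def Ubreve {η : ℕ} (w L U : Fin η → ℝ) (i : Fin η) : ℝ :=
  if 0 ≤ w i then U i else L i

/-- The graph of the ReLU neuron over the box. -/
noncomputable def grSet {η : ℕ} (w : Fin η → ℝ) (b : ℝ) (L U : Fin η → ℝ) :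
    Set ((Fin η → ℝ) × ℝ) :=
  {p | ∃ x ∈ Box L U, p = (x, ReLU (fAff w b x))}

/-- The LP relaxation `P` of the ideal non-extended formulation. A point is
`(x, y, z)` with `x = p.1`, `y = p.2.1`, `z = p.2.2`. -/
noncomputable def Pset {η : ℕ} (w : Fin η → ℝ) (b : ℝ) (L U : Fin η → ℝ) :
    Set ((Fin η → ℝ) × ℝ × ℝ) :=
  {p | p.1 ∈ Box L U ∧ 0 ≤ p.2.1 ∧ 0 ≤ p.2.2 ∧ p.2.2 ≤ 1 ∧ fAff w b p.1 ≤ p.2.1 ∧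
    ∀ I : Finset (Fin η), (∀ i ∈ I, w i ≠ 0) →
      p.2.1 ≤ (∑ i ∈ I, w i * (p.1 i - Lbreve w L U i * (1 - p.2.2)))
        + (b + ∑ i ∈ Iᶜ, w i * Ubreve w L U i) * p.2.2}

/-- The LP relaxation `R` of the big-`M` formulation. -/
noncomputable def Rset {η : ℕ} (w : Fin η → ℝ) (b : ℝ) (L U : Fin η → ℝ) :
    Set ((Fin η → ℝ) × ℝ × ℝ) :=
  {p | p.1 ∈ Box L U ∧ 0 ≤ p.2.1 ∧ 0 ≤ p.2.2 ∧ p.2.2 ≤ 1 ∧ fAff w b p.1 ≤ p.2.1 ∧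
    p.2.1 ≤ fAff w b p.1 - ((∑ i, w i * Lbreve w L U i) + b) * (1 - p.2.2) ∧
    p.2.1 ≤ ((∑ i, w i * Ubreve w L U i) + b) * p.2.2}

/-- The LP relaxation `Q` of the multiple-choice extended formulation. A point is
`(x, y, z, x⁰, x¹, y⁰, y¹)`. -/
noncomputable def Qset {η : ℕ} (w : Fin η → ℝ) (b : ℝ) (L U : Fin η → ℝ) :
    Set ((Fin η → ℝ) × ℝ × ℝ × (Fin η → ℝ) × (Fin η → ℝ) × ℝ × ℝ) :=
  {q | match q with
    | (x, y, z, x0, x1, y0, y1) =>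
      x = x0 + x1 ∧ y = y0 + y1 ∧ y0 = 0 ∧
      (∑ i, w i * x0 i) + b * (1 - z) ≤ 0 ∧
      y1 = (∑ i, w i * x1 i) + b * z ∧ 0 ≤ y1 ∧
      (∀ i, L i * (1 - z) ≤ x0 i ∧ x0 i ≤ U i * (1 - z)) ∧
      (∀ i, L i * z ≤ x1 i ∧ x1 i ≤ U i * z) ∧
      0 ≤ z ∧ z ≤ 1}

/-- Projecting out the auxiliary continuous variables of the multiple-choice
extended formulation yields exactly the ideal non-extended relaxation `P`. -/
theorem projection_of_extended_eq_ideal {η : ℕ} (w : Fin η → ℝ) (b : ℝ)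
    (L U : Fin η → ℝ) (hLU : ∀ i, L i < U i)
    (x : Fin η → ℝ) (y z : ℝ) :
    (∃ (x0 x1 : Fin η → ℝ) (y0 y1 : ℝ),
        (x, y, z, x0, x1, y0, y1) ∈ Qset w b L U)
      ↔ (x, y, z) ∈ Pset w b L U := by
  constructor
  · rintro ⟨x0, x1, y0, y1, hx, hy, hy0, h0, hy1, hy1n, hb0, hb1, hz0, hz1⟩
    have hxi : ∀ i, x i = x0 i + x1 i := fun i => by rw [hx]; rfl
    refine ⟨fun i => ⟨?_, ?_⟩, ?_, hz0, hz1, ?_, ?_⟩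
    · have h0i := (hb0 i).1; have h1i := (hb1 i).1
      have hh := hxi i; nlinarith
    · have h0i := (hb0 i).2; have h1i := (hb1 i).2
      have hh := hxi i; nlinarith
    · linarith
    · have hsum : ∑ i, w i * x i = ∑ i, w i * x0 i + ∑ i, w i * x1 i := by
        rw [← Finset.sum_add_distrib]
        exact Finset.sum_congr rfl fun i _ => by rw [hxi i]; ring
      simp only [fAff]
      linarith
    · intro I hI
      have key1 : ∀ i ∈ I, w i * x1 i ≤ w i * (x i - Lbreve w L U i * (1 - z)) := by
        intro i _
        rcases le_or_gt 0 (w i) with h | h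
        · have h0i := (hb0 i).1; have hh := hxi i
          simp only [Lbreve, if_pos h]
          nlinarith
        · have h0i := (hb0 i).2; have hh := hxi i
          simp only [Lbreve, if_neg (not_le.mpr h)]
          nlinarith
      have key2 : ∀ i ∈ Iᶜ, w i * x1 i ≤ w i * Ubreve w L U i * z := by
        intro i _
        rcases le_or_gt 0 (w i) with h | h
        · have h1i := (hb1 i).2
          simp only [Ubreve, if_pos h]; nlinarith
        · have h1i := (hb1 i).1
          simp only [Ubreve, if_neg (not_le.mpr h)]; nlinarith
      have hsplit : ∑ i ∈ I, w i * x1 i + ∑ i ∈ Iᶜ, w i * x1 i = ∑ i, w i * x1 i :=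
        Finset.sum_add_sum_compl I _
      have hk1 := Finset.sum_le_sum key1
      have hk2 := Finset.sum_le_sum key2
      have hR : (b + ∑ i ∈ Iᶜ, w i * Ubreve w L U i) * z
          = b * z + ∑ i ∈ Iᶜ, w i * Ubreve w L U i * z := by
        rw [add_mul, Finset.sum_mul]
      linarith
  · rintro ⟨hbox, hy0, hz0, hz1, hfx, hP⟩
    set a : Fin η → ℝ := fun i => max (L i * z) (x i - U i * (1 - z)) with hadef
    set c : Fin η → ℝ := fun i => min (U i * z) (x i - L i * (1 - z)) with hcdef
    have hac : ∀ i, a i ≤ c i := by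
      intro i
      have h1 := (hbox i).1; have h2 := (hbox i).2
      have hLUi := (hLU i).le
      refine max_le (le_min ?_ ?_) (le_min ?_ ?_) <;> nlinarith
    have haL : ∀ i, L i * z ≤ a i := fun i => le_max_left _ _
    have haU : ∀ i, x i - U i * (1 - z) ≤ a i := fun i => le_max_right _ _
    have hcU : ∀ i, c i ≤ U i * z := fun i => min_le_left _ _
    have hcL : ∀ i, c i ≤ x i - L i * (1 - z) := fun i => min_le_right _ _
    set xmin : Fin η → ℝ := fun i => if 0 ≤ w i then a i else c i with hmindef
    set xmax : Fin η → ℝ := fun i => if 0 ≤ w i then c i else a i with hmaxdef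
    set m : ℝ := ∑ i, w i * xmin i with hmdef
    set M : ℝ := ∑ i, w i * xmax i with hMdef
    have hminmem : ∀ i, a i ≤ xmin i ∧ xmin i ≤ c i := by
      intro i; simp only [hmindef]; split_ifs
      · exact ⟨le_refl _, hac i⟩
      · exact ⟨hac i, le_refl _⟩
    have hmaxmem : ∀ i, a i ≤ xmax i ∧ xmax i ≤ c i := by
      intro i; simp only [hmaxdef]; split_ifs
      · exact ⟨hac i, le_refl _⟩
      · exact ⟨le_refl _, hac i⟩
    have hmM : m ≤ M := by
      apply Finset.sum_le_sum
      intro i _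
      simp only [hmindef, hmaxdef]
      rcases le_or_gt 0 (w i) with h | h
      · simp only [if_pos h]; exact mul_le_mul_of_nonneg_left (hac i) h
      · simp only [if_neg (not_le.mpr h)]
        exact mul_le_mul_of_nonpos_left (hac i) h.le
    -- lower bound: m ≤ y - b * z
    have h1' : m ≤ y - b * z := by
      have hterm : ∀ i ∈ Finset.univ, w i * xmin i ≤ w i * x i * z := by
        intro i _
        have hx1 := (hbox i).1; have hx2 := (hbox i).2
        simp only [hmindef]
        rcases le_or_gt 0 (w i) with h | h
        · simp only [if_pos h]
          have haux : a i ≤ x i * z := max_le (by nlinarith) (by nlinarith)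
          nlinarith
        · simp only [if_neg (not_le.mpr h)]
          have haux : x i * z ≤ c i := le_min (by nlinarith) (by nlinarith)
          nlinarith
      have hsum := Finset.sum_le_sum hterm
      have hmul : ∑ i, w i * x i * z = (∑ i, w i * x i) * z := by
        rw [Finset.sum_mul]
      have hfx' : (∑ i, w i * x i) + b ≤ y := hfx
      nlinarith [mul_nonneg (sub_nonneg.mpr hz1) hy0,
        mul_nonneg hz0 (sub_nonneg.mpr hfx')]
    -- upper bound: y - b * z ≤ M
    have h2' : y - b * z ≤ M := by
      set I : Finset (Fin η) := Finset.univ.filter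
        (fun i => w i ≠ 0 ∧ w i * (x i - Lbreve w L U i * (1 - z)) ≤ w i * Ubreve w L U i * z)
        with hIdef
      have hI : ∀ i ∈ I, w i ≠ 0 := by
        intro i hi
        exact ((Finset.mem_filter.mp hi).2).1
      have hPI := hP I hI
      have key1 : ∀ i ∈ I, w i * (x i - Lbreve w L U i * (1 - z)) ≤ w i * xmax i := by
        intro i hi
        have hcond := ((Finset.mem_filter.mp hi).2).2
        simp only [hmaxdef]
        rcases le_or_gt 0 (w i) with h | h
        · have hw : 0 < w i := lt_of_le_of_ne h (Ne.symm ((Finset.mem_filter.mp hi).2).1)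
          simp only [if_pos h]
          simp only [Lbreve, Ubreve, if_pos h] at hcond ⊢
          have hle : x i - L i * (1 - z) ≤ U i * z := by
            have := (mul_le_mul_iff_right₀ hw).mp (by linarith [hcond] : w i * (x i - L i * (1 - z)) ≤ w i * (U i * z))
            linarith
          have hcc : c i = x i - L i * (1 - z) := min_eq_right hle
          rw [hcc]
        · simp only [if_neg (not_le.mpr h)]
          simp only [Lbreve, Ubreve, if_neg (not_le.mpr h)] at hcond ⊢
          have hle : L i * z ≤ x i - U i * (1 - z) := by
            nlinarith
          have haa : a i = x i - U i * (1 - z) := max_eq_right hle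
          rw [haa]
      have key2 : ∀ i ∈ Iᶜ, w i * Ubreve w L U i * z ≤ w i * xmax i := by
        intro i hi
        rcases eq_or_ne (w i) 0 with h0 | h0
        · simp [h0]
        · have hcond : ¬ (w i * (x i - Lbreve w L U i * (1 - z)) ≤ w i * Ubreve w L U i * z) := by
            intro hcon
            have : i ∈ I := Finset.mem_filter.mpr ⟨Finset.mem_univ i, h0, hcon⟩
            exact (Finset.mem_compl.mp hi) this
          have hcond' := lt_of_not_ge hcond
          simp only [hmaxdef]
          rcases le_or_gt 0 (w i) with h | h
          · have hw : 0 < w i := lt_of_le_of_ne h (Ne.symm h0)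
            simp only [if_pos h]
            simp only [Lbreve, Ubreve, if_pos h] at hcond' ⊢
            have hle : U i * z ≤ x i - L i * (1 - z) := by nlinarith
            have hcc : c i = U i * z := min_eq_left hle
            rw [hcc]; exact le_of_eq (by ring)
          · simp only [if_neg (not_le.mpr h)]
            simp only [Lbreve, Ubreve, if_neg (not_le.mpr h)] at hcond' ⊢
            have hle : x i - U i * (1 - z) ≤ L i * z := by nlinarith
            have haa : a i = L i * z := max_eq_left hle
            rw [haa]; exact le_of_eq (by ring)
      have hk1 := Finset.sum_le_sum key1
      have hk2 := Finset.sum_le_sum key2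
      have hsplit : ∑ i ∈ I, w i * xmax i + ∑ i ∈ Iᶜ, w i * xmax i = ∑ i, w i * xmax i :=
        Finset.sum_add_sum_compl I _
      have hR : (b + ∑ i ∈ Iᶜ, w i * Ubreve w L U i) * z
          = b * z + ∑ i ∈ Iᶜ, w i * Ubreve w L U i * z := by
        rw [add_mul, Finset.sum_mul]
      linarith
    -- choose t
    set t : ℝ := if M = m then (0:ℝ) else (y - b * z - m) / (M - m) with htdef
    have ht0 : 0 ≤ t := by
      simp only [htdef]
      split_ifs with h
      · exact le_refl _
      · have hlt : m < M := lt_of_le_of_ne hmM (Ne.symm h)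
        exact div_nonneg (by linarith) (by linarith)
    have ht1 : t ≤ 1 := by
      simp only [htdef]
      split_ifs with h
      · linarith
      · have hlt : m < M := lt_of_le_of_ne hmM (Ne.symm h)
        rw [div_le_one (by linarith)]
        linarith
    have htx : m + t * (M - m) = y - b * z := by
      simp only [htdef]
      split_ifs with h
      · rw [h] at h2' ⊢; linarith
      · have hlt : m < M := lt_of_le_of_ne hmM (Ne.symm h)
        rw [div_mul_cancel₀ _ (by linarith : M - m ≠ 0)]
        ring
    set x1 : Fin η → ℝ := fun i => xmin i + t * (xmax i - xmin i) with hx1def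
    have hx1a : ∀ i, a i ≤ x1 i := by
      intro i
      have h1 := hminmem i; have h2 := hmaxmem i
      simp only [hx1def]
      nlinarith [mul_nonneg ht0 (sub_nonneg.mpr h2.1), mul_nonneg ht0 (sub_nonneg.mpr h1.1)]
    have hx1c : ∀ i, x1 i ≤ c i := by
      intro i
      have h1 := hminmem i; have h2 := hmaxmem i
      simp only [hx1def]
      nlinarith [mul_nonneg ht0 (sub_nonneg.mpr h2.2), mul_nonneg ht0 (sub_nonneg.mpr h1.2)]
    have hsum1 : ∑ i, w i * x1 i = y - b * z := by
      have heach : ∀ i ∈ Finset.univ, w i * x1 i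
          = w i * xmin i + t * (w i * xmax i) - t * (w i * xmin i) := by
        intro i _; simp only [hx1def]; ring
      rw [Finset.sum_congr rfl heach]
      rw [Finset.sum_sub_distrib, Finset.sum_add_distrib, ← Finset.mul_sum, ← Finset.mul_sum]
      rw [← hmdef, ← hMdef] at *
      linarith [htx]
    refine ⟨fun i => x i - x1 i, x1, 0, y, ?_, by ring, rfl, ?_, ?_, hy0, ?_, ?_, hz0, hz1⟩
    · funext i; simp
    · have hs : ∑ i, w i * (x i - x1 i) = ∑ i, w i * x i - ∑ i, w i * x1 i := by
        rw [← Finset.sum_sub_distrib]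
        exact Finset.sum_congr rfl fun i _ => by ring
      have hfx' : (∑ i, w i * x i) + b ≤ y := hfx
      rw [hs, hsum1]; linarith
    · rw [hsum1]; ring
    · intro i
      have hA := hx1c i
      have hB := hcL i
      have hC := hx1a i
      have hD := haU i
      constructor
      · show L i * (1 - z) ≤ x i - x1 i
        linarith
      · show x i - x1 i ≤ U i * (1 - z)
        linarith
    · intro i
      exact ⟨le_trans (haL i) (hx1a i), le_trans (hx1c i) (hcU i)⟩
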